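/- Let κ, λ, c ∈ ℝ² be fixed vectors with c·κ ≠ 0, and define the section σ: ℝ×ℝ → E(2) by σ(p,q) = (R(q)(κp + λ), q). Then for every element (r,θ) ∈ E(2) and every (p,q) ∈ ℝ×ℝ there exist a unique p′ ∈ ℝ and a vector x ∈ ℝ² with c·x = 0 such that (r,θ)·σ(p,q) = σ(p′, q+θ)·(x,0); explicitly p′ = p + (c·R(−q−θ)r)/(c·κ) and x = R(−q−θ)r + κ(p − p′). -/

import Mathlib

open Real

/-- Rotation of `ℝ²` by angle `θ`. -/
noncomputable def Rot (θ : ℝ) (v : ℝ × ℝ) : ℝ × ℝ :=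
  (Real.cos θ * v.1 - Real.sin θ * v.2, Real.sin θ * v.1 + Real.cos θ * v.2)

/-- Euclidean scalar product of `ℝ²`. -/
def dot (a b : ℝ × ℝ) : ℝ := a.1 * b.1 + a.2 * b.2

/-- Composition law of the Euclidean group `E(2) = ℝ² ⋊ SO(2)`:
`(x₁,θ₁)(x₂,θ₂) = (x₁ + R(θ₁)x₂, θ₁ + θ₂)`. -/
noncomputable def mulE2 (g h : (ℝ × ℝ) × ℝ) : (ℝ × ℝ) × ℝ :=
  (g.1 + Rot g.2 h.1, g.2 + h.2)

/-- The section `σ(p,q) = (R(q)(κp + λ), q)` of `E(2)` over the cylinder. -/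
noncomputable def sec (κ lam : ℝ × ℝ) (p q : ℝ) : (ℝ × ℝ) × ℝ :=
  (Rot q (p • κ + lam), q)

/-- For fixed `κ, λ, c ∈ ℝ²` with `c·κ ≠ 0`, every `(r,θ) ∈ E(2)` and `(p,q)` admit a unique
`p′ ∈ ℝ` and a vector `x ∈ ℝ²` with `c·x = 0` such that
`(r,θ)·σ(p,q) = σ(p′, q+θ)·(x,0)`; explicitly `p′ = p + (c·R(−q−θ)r)/(c·κ)` and
`x = R(−q−θ)r + (p − p′)κ`. -/

lemma rot_rot (a b : ℝ) (v : ℝ × ℝ) : Rot a (Rot b v) = Rot (a + b) v := by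
  simp only [Rot, cos_add, sin_add, Prod.mk.injEq]
  constructor <;> ring

lemma rot_zero (v : ℝ × ℝ) : Rot 0 v = v := by simp [Rot]

lemma rot_neg_rot (a : ℝ) (v : ℝ × ℝ) : Rot (-a) (Rot a v) = v := by
  rw [rot_rot, neg_add_cancel, rot_zero]

lemma rot_add (a : ℝ) (u v : ℝ × ℝ) : Rot a (u + v) = Rot a u + Rot a v := by
  simp only [Rot, Prod.mk_add_mk, Prod.fst_add, Prod.snd_add, Prod.mk.injEq]
  constructor <;> ring

lemma rot_smul (a : ℝ) (s : ℝ) (v : ℝ × ℝ) : Rot a (s • v) = s • Rot a v := by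
  simp only [Rot, Prod.smul_mk, smul_eq_mul, Prod.smul_fst, Prod.smul_snd, Prod.mk.injEq]
  constructor <;> ring

lemma dot_add (c u v : ℝ × ℝ) : dot c (u + v) = dot c u + dot c v := by
  simp only [dot, Prod.fst_add, Prod.snd_add]; ring

lemma dot_smul (c : ℝ × ℝ) (s : ℝ) (v : ℝ × ℝ) : dot c (s • v) = s * dot c v := by
  simp only [dot, Prod.smul_fst, Prod.smul_snd, smul_eq_mul]; ring

lemma sec_mul_key (κ lam : ℝ × ℝ) (r : ℝ × ℝ) (θ p q p' : ℝ) (x : ℝ × ℝ) :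
    mulE2 (r, θ) (sec κ lam p q) = mulE2 (sec κ lam p' (q + θ)) (x, 0) ↔
    x = Rot (-q - θ) r + (p - p') • κ := by
  simp only [mulE2, sec, Prod.mk.injEq]
  constructor
  · rintro ⟨h1, -⟩
    rw [rot_rot] at h1
    have h2 : Rot (q + θ) x = r + Rot (θ + q) (p • κ + lam) - Rot (q + θ) (p' • κ + lam) := by
      rw [h1]; abel
    have := congrArg (Rot (-(q+θ))) h2
    rw [rot_neg_rot] at this
    rw [this]
    have : -q - θ = -(q+θ) := by ring
    rw [this]
    rw [show (θ + q) = (q + θ) by ring]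
    rw [show r + Rot (q + θ) (p • κ + lam) - Rot (q + θ) (p' • κ + lam)
        = r + (Rot (q + θ) (p • κ + lam) - Rot (q + θ) (p' • κ + lam)) by ring]
    rw [rot_add]
    congr 1
    have hd : Rot (q + θ) (p • κ + lam) - Rot (q + θ) (p' • κ + lam)
        = Rot (q + θ) ((p - p') • κ) := by
      simp only [Rot, Prod.fst_add, Prod.snd_add, Prod.smul_fst, Prod.smul_snd,
        smul_eq_mul, Prod.ext_iff, Prod.smul_mk, Prod.mk_add_mk, Prod.mk_sub_mk]
      constructor <;> ring
    rw [hd, rot_neg_rot]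
  · rintro rfl
    refine ⟨?_, by ring⟩
    rw [rot_rot, rot_add (q + θ) (Rot (-q - θ) r) ((p - p') • κ),
      rot_rot (q + θ) (-q - θ) r, show q + θ + (-q - θ) = 0 by ring, rot_zero,
      rot_smul, show θ + q = q + θ by ring]
    have : Rot (q + θ) (p' • κ + lam) + (p - p') • Rot (q + θ) κ
        = Rot (q + θ) (p • κ + lam) := by
      simp only [Rot, Prod.fst_add, Prod.snd_add, Prod.smul_fst, Prod.smul_snd,
        smul_eq_mul, Prod.ext_iff, Prod.smul_mk, Prod.mk_add_mk, Prod.mk_sub_mk]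
      constructor <;> ring
    rw [show Rot (q + θ) (p' • κ + lam) + (r + (p - p') • Rot (q + θ) κ)
        = (Rot (q + θ) (p' • κ + lam) + (p - p') • Rot (q + θ) κ) + r by ring, this]
    ring

theorem section_decomposition (κ lam c : ℝ × ℝ) (hc : dot c κ ≠ 0)
    (r : ℝ × ℝ) (θ p q : ℝ) :
    (∃! p' : ℝ, ∃ x : ℝ × ℝ, dot c x = 0 ∧
        mulE2 (r, θ) (sec κ lam p q) = mulE2 (sec κ lam p' (q + θ)) (x, 0)) ∧
    (dot c (Rot (-q - θ) r + (p - (p + dot c (Rot (-q - θ) r) / dot c κ)) • κ) = 0 ∧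
      mulE2 (r, θ) (sec κ lam p q) =
        mulE2 (sec κ lam (p + dot c (Rot (-q - θ) r) / dot c κ) (q + θ))
          (Rot (-q - θ) r + (p - (p + dot c (Rot (-q - θ) r) / dot c κ)) • κ, 0)) := by
  have hx0 : dot c (Rot (-q - θ) r
      + (p - (p + dot c (Rot (-q - θ) r) / dot c κ)) • κ) = 0 := by
    rw [dot_add, dot_smul]
    field_simp
    ring
  have heq := (sec_mul_key κ lam r θ p q
      (p + dot c (Rot (-q - θ) r) / dot c κ)
      (Rot (-q - θ) r + (p - (p + dot c (Rot (-q - θ) r) / dot c κ)) • κ)).mpr rfl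
  refine ⟨⟨p + dot c (Rot (-q - θ) r) / dot c κ, ⟨_, hx0, heq⟩, ?_⟩, hx0, heq⟩
  rintro p' ⟨x, hx, hmul⟩
  rw [sec_mul_key] at hmul
  subst hmul
  rw [dot_add, dot_smul] at hx
  field_simp
  linear_combination -hx
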